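/- 𝔰 = 𝔰_{ω,ω}: the splitting number equals the least cardinality of an (ω,ω)-splitting family. -/

import Mathlib

open Set

def Splits (x a : Set ℕ) : Prop := (a ∩ x).Infinite ∧ (a \ x).Infinite

def SplittingFamily (F : Set (Set ℕ)) : Prop :=
  ∀ a : Set ℕ, a.Infinite → ∃ x ∈ F, Splits x a

def OmegaOmegaSplitting (F : Set (Set ℕ)) : Prop :=
  ∀ a : ℕ → Set ℕ, (∀ n, (a n).Infinite) →
    ∃ x ∈ F, {n | (a n ∩ x).Infinite}.Infinite ∧ {n | (a n \ x).Infinite}.Infinite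

noncomputable def sNum : Cardinal :=
  sInf {c | ∃ F : Set (Set ℕ), SplittingFamily F ∧ Cardinal.mk F = c}

noncomputable def sOmegaOmegaNum : Cardinal :=
  sInf {c | ∃ F : Set (Set ℕ), OmegaOmegaSplitting F ∧ Cardinal.mk F = c}

def ADFamily (A : Set (Set ℕ)) : Prop :=
  (∀ a ∈ A, a.Infinite) ∧ A.Pairwise fun a b => (a ∩ b).Finite

def MADFamily (A : Set (Set ℕ)) : Prop :=
  ADFamily A ∧ A.Infinite ∧ ∀ B, ADFamily B → A ⊆ B → A = B

noncomputable def aNum : Cardinal :=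
  sInf {c | ∃ A : Set (Set ℕ), MADFamily A ∧ Cardinal.mk A = c}

/-- The ideal generated by an a.d. family together with the finite sets:
`b ∈ adIdeal A` iff `b ⊆* a₀ ∪ ⋯ ∪ a_k` for finitely many members of `A`. -/
def adIdeal (A : Set (Set ℕ)) : Set (Set ℕ) :=
  {b | ∃ S : Finset (Set ℕ), ↑S ⊆ A ∧ (b \ ⋃ a ∈ S, a).Finite}

def CompSep (A : Set (Set ℕ)) : Prop :=
  ∀ b : Set ℕ, b ∉ adIdeal A → ∃ a ∈ A, a ⊆ b

noncomputable def bNum : Cardinal :=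
  sInf {c | ∃ F : Set (ℕ → ℕ),
    (∀ g : ℕ → ℕ, ∃ f ∈ F, {n | g n < f n}.Infinite) ∧ Cardinal.mk F = c}

def BlockSplitting (F : Set (Set ℕ)) : Prop :=
  ∀ s : ℕ → Finset ℕ, (∀ n, (s n).Nonempty) →
    (Pairwise fun m n => Disjoint (s m) (s n)) →
    (⋃ n, (s n : Set ℕ)) = Set.univ →
    ∃ x ∈ F, {n | (s n : Set ℕ) ⊆ x}.Infinite ∧ {n | (s n : Set ℕ) ∩ x = ∅}.Infinite

/-- `sel x false = x = x⁰`, `sel x true = xᶜ = x¹`. -/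
def sel (x : Set ℕ) : Bool → Set ℕ
  | false => x
  | true => xᶜ

/-- An element of `2^{<κ}`: a binary sequence of some length `dom < κ`. -/
structure PNode (κ : Ordinal) where
  dom : Ordinal
  dom_lt : dom < κ
  val : ∀ ξ : Ordinal, ξ < dom → Bool

/-- End-extension of nodes. -/
def PNode.Ext {κ : Ordinal} (σ τ : PNode κ) : Prop :=
  ∃ h : σ.dom ≤ τ.dom, ∀ ξ (hξ : ξ < σ.dom), σ.val ξ hξ = τ.val ξ (lt_of_lt_of_le hξ h)

namespace Stmt4Aux

noncomputable def nf (f : ℕ → ℕ) (n : ℕ) : ℕ := n + 1 + (Finset.range (n + 1)).sup f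

lemma nf_strictMono (f : ℕ → ℕ) : StrictMono (nf f) := by
  intro x y hxy
  have h : (Finset.range (x + 1)).sup f ≤ (Finset.range (y + 1)).sup f :=
    Finset.sup_mono (Finset.range_subset_range.mpr (by omega))
  simp only [nf]; omega

lemma lt_nf (f : ℕ → ℕ) (n : ℕ) : n < nf f n := by simp only [nf]; omega

lemma le_nf (f : ℕ → ℕ) (n : ℕ) : f n ≤ nf f n := by
  have h : f n ≤ (Finset.range (n + 1)).sup f :=
    Finset.le_sup (Finset.mem_range.mpr (by omega))
  simp only [nf]; omega

def useq (f : ℕ → ℕ) (k : ℕ) : ℕ := f^[k] 0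

lemma useq_succ (f : ℕ → ℕ) (k : ℕ) : useq f (k+1) = f (useq f k) :=
  Function.iterate_succ_apply' f k 0

lemma useq_strictMono (f : ℕ → ℕ) (hf : ∀ n, n < f n) : StrictMono (useq f) :=
  strictMono_nat_of_lt_succ fun k => by rw [useq_succ]; exact hf _

lemma useq_cover (f : ℕ → ℕ) (hf : ∀ n, n < f n) (j : ℕ) :
    ∃ k, useq f k ≤ j ∧ j < useq f (k+1) := by
  induction j with
  | zero =>
    refine ⟨0, le_rfl, ?_⟩
    have h1 : useq f (0+1) = f 0 := useq_succ f 0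
    have := hf 0
    omega
  | succ j ih =>
    obtain ⟨k, h1, h2⟩ := ih
    rcases lt_or_ge (j+1) (useq f (k+1)) with h | h
    · exact ⟨k, by omega, h⟩
    · have heq : useq f (k+1) = j+1 := by omega
      refine ⟨k+1, by omega, ?_⟩
      have : useq f (k+1) < useq f (k+1+1) := useq_strictMono f hf (Nat.lt_succ_self (k+1))
      omega

def xf (f : ℕ → ℕ) (x : Set ℕ) : Set ℕ :=
  {j | ∃ k ∈ x, useq f (2*k) ≤ j ∧ j < useq f (2*k+2)}

noncomputable def gseq (a : ℕ → Set ℕ) (ha : ∀ n, (a n).Infinite) : ℕ → ℕ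
  | 0 => 0
  | n+1 => gseq a ha n + 1 +
      (Finset.range (n+1)).sup fun m => Classical.choose ((ha m).exists_gt (gseq a ha n))

lemma gseq_strictMono (a : ℕ → Set ℕ) (ha : ∀ n, (a n).Infinite) :
    StrictMono (gseq a ha) :=
  strictMono_nat_of_lt_succ fun n => by
    conv_rhs => rw [gseq]
    omega

lemma gseq_prop (a : ℕ → Set ℕ) (ha : ∀ n, (a n).Infinite) (n m : ℕ) (h : m ≤ n) :
    ∃ j ∈ a m, gseq a ha n < j ∧ j < gseq a ha (n+1) := by
  obtain ⟨h1, h2⟩ := Classical.choose_spec ((ha m).exists_gt (gseq a ha n))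
  refine ⟨_, h1, h2, ?_⟩
  have hle : Classical.choose ((ha m).exists_gt (gseq a ha n)) ≤
      (Finset.range (n+1)).sup fun m => Classical.choose ((ha m).exists_gt (gseq a ha n)) :=
    Finset.le_sup (f := fun m => Classical.choose ((ha m).exists_gt (gseq a ha n)))
      (Finset.mem_range.mpr (Nat.lt_succ_of_le h))
  conv_rhs => rw [gseq]
  omega

noncomputable def tsel (a : ℕ → Set ℕ) (ha : ∀ n, (a n).Infinite) (g : ℕ → ℕ) : ℕ → ℕ
  | 0 => Classical.choose ((ha 0).exists_gt (g 0))
  | n+1 => Classical.choose ((ha (n+1)).exists_gt (max (g (n+1)) (tsel a ha g n)))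

lemma tsel_mem (a : ℕ → Set ℕ) (ha : ∀ n, (a n).Infinite) (g : ℕ → ℕ) (n : ℕ) :
    tsel a ha g n ∈ a n := by
  cases n with
  | zero => exact (Classical.choose_spec ((ha 0).exists_gt (g 0))).1
  | succ k => exact (Classical.choose_spec ((ha (k+1)).exists_gt _)).1

lemma tsel_gt (a : ℕ → Set ℕ) (ha : ∀ n, (a n).Infinite) (g : ℕ → ℕ) (n : ℕ) :
    g n < tsel a ha g n := by
  cases n with
  | zero => exact (Classical.choose_spec ((ha 0).exists_gt (g 0))).2
  | succ k =>
    exact lt_of_le_of_lt (le_max_left _ _)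
      (Classical.choose_spec ((ha (k+1)).exists_gt (max (g (k+1)) (tsel a ha g k)))).2

lemma tsel_strictMono (a : ℕ → Set ℕ) (ha : ∀ n, (a n).Infinite) (g : ℕ → ℕ) :
    StrictMono (tsel a ha g) :=
  strictMono_nat_of_lt_succ fun k =>
    lt_of_le_of_lt (le_max_right _ _)
      (Classical.choose_spec ((ha (k+1)).exists_gt (max (g (k+1)) (tsel a ha g k)))).2

lemma exists_splits (a : Set ℕ) (ha : a.Infinite) : ∃ x, Splits x a := by
  classical
  set e := ha.natEmbedding with he
  set v : ℕ → ℕ := fun n => (e n : ℕ) with hv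
  have hvinj : Function.Injective v := fun m n h => e.injective (Subtype.ext h)
  have hva : ∀ n, v n ∈ a := fun n => (e n).2
  have heven : {n : ℕ | Even n}.Infinite :=
    Set.infinite_of_forall_exists_gt fun n => ⟨2*(n+1), ⟨n+1, by ring⟩, by omega⟩
  have hodd : {n : ℕ | ¬ Even n}.Infinite :=
    Set.infinite_of_forall_exists_gt fun n =>
      ⟨2*n+1, by rw [Set.mem_setOf_eq, Nat.even_iff]; omega, by omega⟩
  refine ⟨v '' {n | Even n}, ?_, ?_⟩
  · have hx : v '' {n | Even n} ⊆ a := by rintro _ ⟨n, _, rfl⟩; exact hva n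
    exact (heven.image hvinj.injOn).mono (Set.subset_inter hx le_rfl)
  · refine (hodd.image hvinj.injOn).mono ?_
    rintro _ ⟨n, hn, rfl⟩
    refine ⟨hva n, ?_⟩
    rintro ⟨m, hm, hvm⟩
    exact hn (hvinj hvm ▸ hm)

lemma splitting_univ : SplittingFamily Set.univ :=
  fun a ha => by obtain ⟨x, hx⟩ := exists_splits a ha; exact ⟨x, Set.mem_univ x, hx⟩

lemma exists_homog (s : Finset (Set ℕ)) :
    ∃ a : Set ℕ, a.Infinite ∧ ∀ x ∈ s, a ⊆ x ∨ a ∩ x = ∅ := by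
  classical
  induction s using Finset.induction_on with
  | empty => exact ⟨Set.univ, Set.infinite_univ, by simp⟩
  | @insert z s hz ih =>
    obtain ⟨a, ha, hprop⟩ := ih
    have hsplit : (a ∩ z).Infinite ∨ (a \ z).Infinite := by
      by_contra h
      push_neg at h
      obtain ⟨h1, h2⟩ := h
      exact ha (by rw [← Set.inter_union_diff a z]; exact h1.union h2)
    rcases hsplit with h | h
    · refine ⟨a ∩ z, h, fun y hy => ?_⟩
      rcases Finset.mem_insert.mp hy with rfl | hy
      · exact Or.inl Set.inter_subset_right
      · rcases hprop y hy with h' | h'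
        · exact Or.inl (Set.inter_subset_left.trans h')
        · exact Or.inr (Set.eq_empty_of_subset_empty
            (h' ▸ Set.inter_subset_inter_left y Set.inter_subset_left))
    · refine ⟨a \ z, h, fun y hy => ?_⟩
      rcases Finset.mem_insert.mp hy with rfl | hy
      · exact Or.inr (Set.diff_inter_self)
      · rcases hprop y hy with h' | h'
        · exact Or.inl (Set.diff_subset.trans h')
        · exact Or.inr (Set.eq_empty_of_subset_empty
            (h' ▸ Set.inter_subset_inter_left y Set.diff_subset))

lemma splittingFamily_infinite {F : Set (Set ℕ)} (hF : SplittingFamily F) : F.Infinite := by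
  by_contra hfin
  rw [Set.not_infinite] at hfin
  obtain ⟨a, ha, hprop⟩ := exists_homog hfin.toFinset
  obtain ⟨x, hxF, h1, h2⟩ := hF a ha
  rcases hprop x (hfin.mem_toFinset.mpr hxF) with h | h
  · rw [Set.diff_eq_empty.mpr h] at h2
    exact h2 Set.finite_empty
  · rw [h] at h1
    exact h1 Set.finite_empty


lemma caseA (F : Set (Set ℕ)) (hF : SplittingFamily F)
    (hdom : ∀ φ : F → (ℕ → ℕ), ∃ g : ℕ → ℕ, ∀ x : F, {n | g n < φ x n}.Finite) :
    OmegaOmegaSplitting F := by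
  classical
  intro a ha
  by_contra hcon
  push_neg at hcon
  have hy : ∀ x : F, ∃ y : Set ℕ,
      (y = (x : Set ℕ) ∨ y = (x : Set ℕ)ᶜ) ∧ {n | (a n ∩ y).Finite} = {n | (a n ∩ y).Finite} ∧
      {n | (a n ∩ y).Infinite}.Finite := by
    intro x
    by_cases h : {n | (a n ∩ (x : Set ℕ)).Infinite}.Finite
    · exact ⟨x, Or.inl rfl, rfl, h⟩
    · have hinf : {n | (a n ∩ (x : Set ℕ)).Infinite}.Infinite := by
        rw [← Set.not_infinite] at h; exact not_not.mp h
      have h3 : ¬ {n | (a n \ (x : Set ℕ)).Infinite}.Infinite := Set.not_infinite.mpr (hcon x x.2 hinf)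
      rw [Set.not_infinite] at h3
      refine ⟨(x : Set ℕ)ᶜ, Or.inr rfl, rfl, ?_⟩
      simpa [Set.diff_eq] using h3
  choose y hy1 _ hy2 using hy
  set φ : F → ℕ → ℕ :=
    fun x n => if h : (a n ∩ y x).Finite then h.toFinset.sup id + 1 else 0 with hφ
  obtain ⟨g, hg⟩ := hdom φ
  set t := tsel a ha g with ht
  have hb : (Set.range t).Infinite :=
    Set.infinite_range_of_injective (tsel_strictMono a ha g).injective
  obtain ⟨x, hxF, hs1, hs2⟩ := hF _ hb
  set xx : F := (⟨x, hxF⟩ : F) with hxx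
  have hbyinf : (Set.range t ∩ y xx).Infinite := by
    rcases hy1 xx with h | h
    · rw [h]; exact hs1
    · rw [h, ← Set.diff_eq]; exact hs2
  have hE : ({n | (a n ∩ y xx).Infinite} ∪ {n | g n < φ xx n}).Finite :=
    (hy2 xx).union (hg xx)
  have hsub : Set.range t ∩ y xx ⊆
      t '' ({n | (a n ∩ y xx).Infinite} ∪ {n | g n < φ xx n}) := by
    rintro j ⟨⟨n, rfl⟩, hjy⟩
    refine ⟨n, ?_, rfl⟩
    by_contra hn
    rw [Set.mem_union] at hn
    push_neg at hn
    obtain ⟨hn1, hn2⟩ := hn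
    have hfin : (a n ∩ y xx).Finite := Set.not_infinite.mp hn1
    have hle : φ xx n ≤ g n := not_lt.mp hn2
    have htn : t n ∈ a n ∩ y xx := ⟨tsel_mem a ha g n, hjy⟩
    have hsup : t n ≤ hfin.toFinset.sup id :=
      Finset.le_sup (f := id) (hfin.mem_toFinset.mpr htn)
    have hφn : φ xx n = hfin.toFinset.sup id + 1 := by
      rw [hφ]; exact dif_pos hfin
    have hgt : g n < t n := tsel_gt a ha g n
    omega
  exact hbyinf ((hE.image t).subset hsub)




lemma caseB (F : Set (Set ℕ)) (U : Set (ℕ → ℕ)) (hF : SplittingFamily F)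
    (hU : ∀ g : ℕ → ℕ, ∃ f ∈ U, {n | g n < f n}.Infinite) :
    OmegaOmegaSplitting (Set.image2 (fun x f => xf (nf f) x) F U) := by
  classical
  intro a ha
  set g := gseq a ha with hgdef
  have hgs : StrictMono g := gseq_strictMono a ha
  obtain ⟨f₀, hf₀U, hf₀⟩ := hU (fun n => g (g n + 2))
  set f := nf f₀ with hfdef
  have hfm : Monotone f := (nf_strictMono f₀).monotone
  have hflt : ∀ n, n < f n := lt_nf f₀
  have hA : {n | g (g n + 2) < f n}.Infinite :=
    hf₀.mono fun n hn => lt_of_lt_of_le hn (le_nf f₀ n)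
  set u := useq f with hudef
  have hus : StrictMono u := useq_strictMono f hflt
  set S := {K : ℕ | ∃ m, u (2*K) ≤ g m ∧ g (m+1) ≤ u (2*K+2)} with hSdef
  have hkey : ∀ n, g (g n + 2) < f n → ∃ K, K ∈ S ∧ n < u (2*K+2) := by
    intro n hn
    obtain ⟨k, hk1, hk2⟩ := useq_cover f hflt n
    have hex : ∃ m, n ≤ g m := ⟨n, hgs.le_apply⟩
    set m := Nat.find hex with hm
    have hm1 : n ≤ g m := Nat.find_spec hex
    have hmle : m ≤ n := Nat.find_min' hex hgs.le_apply
    have hub : g (m+2) ≤ u (k+1+1) := by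
      have hgn : n ≤ g n := hgs.le_apply
      have h1 : g (m+2) ≤ g (g n + 2) := hgs.monotone (by omega)
      have h2 : f n ≤ u (k+1+1) := by
        rw [hudef, useq_succ]
        exact hfm hk2.le
      omega
    have hlb : u k ≤ g m := le_trans hk1 hm1
    by_cases hc : g (m+1) ≤ u (k+1)
    · refine ⟨k/2, ⟨m, ?_, ?_⟩, ?_⟩
      · exact le_trans (hus.monotone (by omega)) hlb
      · exact le_trans hc (hus.monotone (by omega))
      · exact lt_of_lt_of_le hk2 (hus.monotone (by omega))
    · push_neg at hc
      refine ⟨(k+1)/2, ⟨m+1, ?_, ?_⟩, ?_⟩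
      · exact le_trans (hus.monotone (by omega)) hc.le
      · exact le_trans hub (hus.monotone (by omega))
      · exact lt_of_lt_of_le hk2 (hus.monotone (by omega))
  have hSinf : S.Infinite := by
    apply Set.infinite_of_forall_exists_gt
    intro M
    obtain ⟨n, hnA, hngt⟩ := hA.exists_gt (u (2*M+2))
    obtain ⟨K, hKS, hKn⟩ := hkey n hnA
    refine ⟨K, hKS, ?_⟩
    have h1 : u (2*M+2) < u (2*K+2) := lt_trans hngt hKn
    have h2 : 2*M+2 < 2*K+2 := hus.lt_iff_lt.mp h1
    omega
  obtain ⟨x, hxF, hsp1, hsp2⟩ := hF S hSinf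
  refine ⟨xf f x, Set.mem_image2_of_mem hxF hf₀U, ?_, ?_⟩
  · have hall : ∀ t, (a t ∩ xf f x).Infinite := by
      intro t
      apply Set.infinite_of_forall_exists_gt
      intro N
      obtain ⟨K, hKmem, hKgt⟩ := hsp1.exists_gt (max (g t) N)
      obtain ⟨hKS, hKx⟩ := hKmem
      obtain ⟨m, hm1, hm2⟩ := hKS
      have hu2K : 2*K ≤ u (2*K) := hus.le_apply
      have htm : t ≤ m := by
        by_contra hlt
        push_neg at hlt
        have : g m < g t := hgs hlt
        omega
      obtain ⟨j, hja, hj1, hj2⟩ := gseq_prop a ha m t htm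
      rw [← hgdef] at hj1 hj2
      refine ⟨j, ⟨hja, ⟨K, hKx, le_trans hm1 hj1.le, lt_of_lt_of_le hj2 hm2⟩⟩, by omega⟩
    have heq : {n | (a n ∩ xf f x).Infinite} = Set.univ := Set.eq_univ_of_forall hall
    rw [heq]; exact Set.infinite_univ
  · have hall : ∀ t, (a t \ xf f x).Infinite := by
      intro t
      apply Set.infinite_of_forall_exists_gt
      intro N
      obtain ⟨K, hKmem, hKgt⟩ := hsp2.exists_gt (max (g t) N)
      obtain ⟨hKS, hKx⟩ := hKmem
      obtain ⟨m, hm1, hm2⟩ := hKS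
      have hu2K : 2*K ≤ u (2*K) := hus.le_apply
      have htm : t ≤ m := by
        by_contra hlt
        push_neg at hlt
        have : g m < g t := hgs hlt
        omega
      obtain ⟨j, hja, hj1, hj2⟩ := gseq_prop a ha m t htm
      rw [← hgdef] at hj1 hj2
      have hjnot : j ∉ xf f x := by
        rintro ⟨k', hk'x, h1, h2⟩
        rw [← hudef] at h1 h2
        have hne : k' ≠ K := fun h => hKx (h ▸ hk'x)
        rcases lt_or_gt_of_ne hne with hlt | hlt
        · have : u (2*k'+2) ≤ u (2*K) := hus.monotone (by omega)
          omega
        · have : u (2*K+2) ≤ u (2*k') := hus.monotone (by omega)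
          omega
      refine ⟨j, ⟨hja, hjnot⟩, by omega⟩
    have heq : {n | (a n \ xf f x).Infinite} = Set.univ := Set.eq_univ_of_forall hall
    rw [heq]; exact Set.infinite_univ

end Stmt4Aux



/-- 𝔰 = 𝔰_{ω,ω}. -/
theorem stmt4 : sNum = sOmegaOmegaNum := by
  classical
  have hSne : {c | ∃ F : Set (Set ℕ), SplittingFamily F ∧ Cardinal.mk F = c}.Nonempty :=
    ⟨Cardinal.mk (Set.univ : Set (Set ℕ)), Set.univ, Stmt4Aux.splitting_univ, rfl⟩
  obtain ⟨F₀, hF₀, hmkF₀⟩ : ∃ F : Set (Set ℕ), SplittingFamily F ∧ Cardinal.mk F = sNum :=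
    csInf_mem hSne
  have hs_inf : Cardinal.aleph0 ≤ sNum := by
    apply le_csInf hSne
    rintro c ⟨F, hF, rfl⟩
    exact Cardinal.infinite_iff.mp
      (Set.infinite_coe_iff.mpr (Stmt4Aux.splittingFamily_infinite hF))
  have hkey : ∃ G : Set (Set ℕ), OmegaOmegaSplitting G ∧ Cardinal.mk G ≤ sNum := by
    rcases lt_or_ge sNum bNum with hlt | hge
    · refine ⟨F₀, Stmt4Aux.caseA F₀ hF₀ ?_, hmkF₀.le⟩
      intro φ
      by_contra hcon
      push_neg at hcon
      have hunb : ∀ g : ℕ → ℕ, ∃ f ∈ Set.range φ, {n | g n < f n}.Infinite := by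
        intro g
        obtain ⟨x, hx⟩ := hcon g
        refine ⟨φ x, ⟨x, rfl⟩, ?_⟩
        exact hx
      have hmem : Cardinal.mk (Set.range φ) ∈ {c | ∃ F : Set (ℕ → ℕ),
          (∀ g : ℕ → ℕ, ∃ f ∈ F, {n | g n < f n}.Infinite) ∧ Cardinal.mk F = c} :=
        ⟨Set.range φ, hunb, rfl⟩
      have h1 : bNum ≤ Cardinal.mk (Set.range φ) := csInf_le' hmem
      have h2 : Cardinal.mk (Set.range φ) ≤ Cardinal.mk F₀ := Cardinal.mk_range_le
      rw [hmkF₀] at h2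
      exact absurd (h1.trans h2) (not_le.mpr hlt)
    · have hBne : {c | ∃ F : Set (ℕ → ℕ),
          (∀ g : ℕ → ℕ, ∃ f ∈ F, {n | g n < f n}.Infinite) ∧ Cardinal.mk F = c}.Nonempty := by
        refine ⟨Cardinal.mk (Set.univ : Set (ℕ → ℕ)), Set.univ, fun g => ⟨fun n => g n + 1, Set.mem_univ _, ?_⟩, rfl⟩
        have h : {n : ℕ | g n < g n + 1} = Set.univ :=
          Set.eq_univ_of_forall fun n => Nat.lt_succ_self _
        rw [h]; exact Set.infinite_univ
      obtain ⟨U, hU, hmkU⟩ : ∃ F : Set (ℕ → ℕ),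
          (∀ g : ℕ → ℕ, ∃ f ∈ F, {n | g n < f n}.Infinite) ∧ Cardinal.mk F = bNum :=
        csInf_mem hBne
      refine ⟨_, Stmt4Aux.caseB F₀ U hF₀ hU, ?_⟩
      calc Cardinal.mk (Set.image2 (fun x f => Stmt4Aux.xf (Stmt4Aux.nf f) x) F₀ U)
          ≤ Cardinal.mk F₀ * Cardinal.mk U := Cardinal.mk_image2_le
        _ ≤ sNum * sNum := mul_le_mul' hmkF₀.le (hmkU.le.trans hge)
        _ = sNum := Cardinal.mul_eq_self hs_inf
  obtain ⟨G, hG, hGle⟩ := hkey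
  apply le_antisymm
  · have hOne : {c | ∃ F : Set (Set ℕ), OmegaOmegaSplitting F ∧ Cardinal.mk F = c}.Nonempty :=
      ⟨Cardinal.mk G, G, hG, rfl⟩
    obtain ⟨H, hH, hmkH⟩ : ∃ F : Set (Set ℕ), OmegaOmegaSplitting F ∧
        Cardinal.mk F = sOmegaOmegaNum := csInf_mem hOne
    have hHs : SplittingFamily H := by
      intro b hb
      obtain ⟨x, hxH, h1, h2⟩ := hH (fun _ => b) (fun _ => hb)
      obtain ⟨n1, hn1⟩ := h1.nonempty
      obtain ⟨n2, hn2⟩ := h2.nonempty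
      exact ⟨x, hxH, hn1, hn2⟩
    have hmem : Cardinal.mk H ∈
        {c | ∃ F : Set (Set ℕ), SplittingFamily F ∧ Cardinal.mk F = c} := ⟨H, hHs, rfl⟩
    calc sNum ≤ Cardinal.mk H := csInf_le' hmem
      _ = sOmegaOmegaNum := hmkH
  · have hmem : Cardinal.mk G ∈
        {c | ∃ F : Set (Set ℕ), OmegaOmegaSplitting F ∧ Cardinal.mk F = c} := ⟨G, hG, rfl⟩
    exact (csInf_le' hmem).trans hGle
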